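/- Let {A_n} be a sequence of complex matrices with A_n of size d_n × e_n, where d_n, e_n → ∞, and let f : D ⊂ R^k → C^{r×s} be measurable with 0 < μ_k(D) < ∞. If {A_n} has singular value distribution described by f and f(x) has full rank for almost every x ∈ D, then the proportion of zero singular values vanishes: lim_{n→∞} #{i : σ_i(A_n) = 0} / (d_n ∧ e_n) = 0. -/

import Mathlib

open Matrix MeasureTheory Filter Topology

/-- The multiset of singular values of a rectangular complex matrix. -/
noncomputable def svMultiset {α β : Type*} [Fintype α] [Fintype β] [DecidableEq α]
    [DecidableEq β] (A : Matrix α β ℂ) : Multiset ℝ :=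
  if Fintype.card α ≤ Fintype.card β then
    Finset.univ.val.map fun i =>
      Real.sqrt ((Matrix.isHermitian_mul_conjTranspose_self A).eigenvalues i)
  else
    Finset.univ.val.map fun j =>
      Real.sqrt ((Matrix.isHermitian_conjTranspose_mul_self A).eigenvalues j)

open scoped Classical in
/-- The number of zero elements of a multiset of reals. -/
noncomputable def countZeros (s : Multiset ℝ) : ℕ := (s.filter fun x => x = 0).card

/-- `{A_n}_n ∼_σ f`: the sequence of `d_n × e_n` matrices `A n` has asymptotic singular
value distribution described by the `r × s` matrix-valued function `f` on `D ⊆ ℝ^k`. -/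
def HasSVDist (k r s : ℕ) (d e : ℕ → ℕ) (A : ∀ n, Matrix (Fin (d n)) (Fin (e n)) ℂ)
    (D : Set (Fin k → ℝ)) (f : (Fin k → ℝ) → Matrix (Fin r) (Fin s) ℂ) : Prop :=
  ∀ F : ℝ → ℂ, Continuous F → HasCompactSupport F →
    Tendsto (fun n => ((svMultiset (A n)).map F).sum / ((min (d n) (e n) : ℕ) : ℂ))
      atTop
      (𝓝 (((volume D).toReal : ℂ)⁻¹ *
        ∫ x in D, ((svMultiset (f x)).map F).sum / ((min r s : ℕ) : ℂ)))

open scoped ComplexOrder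

/-- Count of zeros is at most the sum of `G` over the multiset, for `G ≥ 0` with `G 0 = 1`. -/
lemma countZeros_le_sum_map (s0 : Multiset ℝ) (G : ℝ → ℝ) (h0 : ∀ t, 0 ≤ G t) (h1 : G 0 = 1) :
    (countZeros s0 : ℝ) ≤ ((s0.map G).sum : ℝ) := by
  classical
  have hs : s0 = s0.filter (fun x => x = 0) + s0.filter (fun x => ¬ x = 0) :=
    (Multiset.filter_add_not _ _).symm
  have hcz : (countZeros s0 : ℝ) = ((s0.filter (fun x => x = 0)).map G).sum := by
    have hmap : (s0.filter (fun x => x = 0)).map G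
        = (s0.filter (fun x => x = 0)).map (fun _ => (1 : ℝ)) :=
      Multiset.map_congr rfl (fun x hx => by rw [(Multiset.mem_filter.mp hx).2, h1])
    rw [hmap, Multiset.map_const', Multiset.sum_replicate, nsmul_eq_mul, mul_one, countZeros]
  rw [hcz]
  conv_rhs => rw [hs]
  rw [Multiset.map_add, Multiset.sum_add]
  have hnn : 0 ≤ ((s0.filter (fun x => ¬ x = 0)).map G).sum := by
    apply Multiset.sum_nonneg
    intro y hy
    obtain ⟨x, _, rfl⟩ := Multiset.mem_map.mp hy
    exact h0 x
  linarith

/-- Key analytic lemma: for a measurable family of Hermitian PSD matrices with a.e. nonzero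
eigenvalues over a finite measure, the integrals of the tent-function sums tend to zero. -/
lemma herm_aux_tendsto {X : Type*} [MeasurableSpace X] (μ : Measure X) [IsFiniteMeasure μ]
    (p : ℕ) (hp : 0 < p) (B : X → Matrix (Fin p) (Fin p) ℂ)
    (hent : ∀ i j, Measurable fun x => B x i j) (hB : ∀ x, (B x).IsHermitian)
    (hpsd : ∀ x i, 0 ≤ (hB x).eigenvalues i)
    (hrank : ∀ᵐ x ∂μ, ∀ i, (hB x).eigenvalues i ≠ 0) :
    Tendsto (fun m : ℕ => ∫ x,
        ((↑(∑ i, max 0 (1 - ((m : ℝ) + 1) * |Real.sqrt ((hB x).eigenvalues i)|)) : ℂ) / (p : ℂ)) ∂μ)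
      atTop (𝓝 0) := by
  set Λ : X → Fin p → ℝ := fun x => (hB x).eigenvalues with hΛ
  set M : X → ℝ := fun x => max 1 (B x).trace.re with hMdef
  set φ : X → ℝ := fun x => (B x).det.re / M x ^ (p - 1) with hφdef
  have hM1 : ∀ x, (1 : ℝ) ≤ M x := fun x => le_max_left _ _
  have hMpow : ∀ x, 0 < M x ^ (p - 1) := fun x => pow_pos (lt_of_lt_of_le one_pos (hM1 x)) _
  have hdet : ∀ x, (B x).det.re = ∏ i, Λ x i := by
    intro x
    rw [(hB x).det_eq_prod_eigenvalues]
    norm_cast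
  have htr : ∀ x, (B x).trace.re = ∑ i, Λ x i := by
    intro x
    rw [(hB x).trace_eq_sum_eigenvalues]
    rw [Complex.re_sum]
    exact Finset.sum_congr rfl fun i _ => by simp; rfl
  have hle : ∀ x i, φ x ≤ Λ x i := by
    intro x i
    rw [hφdef]
    simp only
    rw [div_le_iff₀ (hMpow x), hdet x]
    have hub : ∀ j, Λ x j ≤ M x := by
      intro j
      calc Λ x j ≤ ∑ l, Λ x l :=
            Finset.single_le_sum (fun l _ => hpsd x l) (Finset.mem_univ j)
        _ = (B x).trace.re := (htr x).symm
        _ ≤ M x := le_max_right _ _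
    calc ∏ j, Λ x j = Λ x i * ∏ j ∈ Finset.univ.erase i, Λ x j :=
          (Finset.mul_prod_erase _ _ (Finset.mem_univ i)).symm
      _ ≤ Λ x i * M x ^ (p - 1) := by
          apply mul_le_mul_of_nonneg_left _ (hpsd x i)
          calc ∏ j ∈ Finset.univ.erase i, Λ x j ≤ ∏ _j ∈ Finset.univ.erase i, M x :=
                Finset.prod_le_prod (fun j _ => hpsd x j) (fun j _ => hub j)
            _ = M x ^ (p - 1) := by
                rw [Finset.prod_const, Finset.card_erase_of_mem (Finset.mem_univ i),
                  Finset.card_univ, Fintype.card_fin]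
  have hφmeas : Measurable φ := by
    have hdetm : Measurable fun x => (B x).det := by
      have heq : (fun x => (B x).det)
          = fun x => ∑ σ : Equiv.Perm (Fin p), Equiv.Perm.sign σ * ∏ i, B x (σ i) i := by
        funext x
        rw [Matrix.det_apply']
      rw [heq]
      exact Finset.measurable_sum _ fun σ _ =>
        (Finset.measurable_prod _ fun i _ => hent _ _).const_mul _
    have htrm : Measurable fun x => (B x).trace := by
      have heq : (fun x => (B x).trace) = fun x => ∑ i, B x i i := by
        funext x; rfl
      rw [heq]
      exact Finset.measurable_sum _ fun i _ => hent _ _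
    have h1 : Measurable fun x => (B x).det.re := Complex.measurable_re.comp hdetm
    have h2 : Measurable M :=
      measurable_const.max (Complex.measurable_re.comp htrm)
    exact h1.div (h2.pow_const _)
  set S : ℕ → Set X := fun m => {x | φ x < (((m : ℝ) + 1)⁻¹) ^ 2} with hSdef
  have hSmeas : ∀ m, MeasurableSet (S m) := fun m => measurableSet_lt hφmeas measurable_const
  have hSanti : Antitone S := by
    intro m m' hmm' x hx
    simp only [hSdef, Set.mem_setOf_eq] at hx ⊢
    refine lt_of_lt_of_le hx ?_
    have h1 : ((m : ℝ) + 1) ≤ ((m' : ℝ) + 1) := by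
      have : (m : ℝ) ≤ (m' : ℝ) := by exact_mod_cast hmm'
      linarith
    have h0 : (0 : ℝ) < (m : ℝ) + 1 := by positivity
    gcongr
  have hφpos : ∀ᵐ x ∂μ, 0 < φ x := by
    refine hrank.mono fun x hx => ?_
    have hprod : 0 < ∏ i, Λ x i :=
      Finset.prod_pos fun i _ => lt_of_le_of_ne (hpsd x i) (Ne.symm (hx i))
    have : 0 < (B x).det.re := by rw [hdet x]; exact hprod
    exact div_pos this (hMpow x)
  have hInter : μ (⋂ m, S m) = 0 := by
    have hsub : (⋂ m, S m) ⊆ {x | ¬ 0 < φ x} := by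
      intro x hx
      simp only [Set.mem_iInter] at hx
      intro hpos
      have h2 : Tendsto (fun m : ℕ => (((m : ℝ) + 1)⁻¹) ^ 2) atTop (𝓝 0) := by
        have h3 := (tendsto_one_div_add_atTop_nhds_zero_nat (𝕜 := ℝ)).pow 2
        simpa [one_div] using h3
      obtain ⟨m, hm⟩ := (h2.eventually (gt_mem_nhds hpos)).exists
      exact absurd (hx m) (not_lt.mpr hm.le)
    exact measure_mono_null hsub (MeasureTheory.ae_iff.mp hφpos)
  have hμS : Tendsto (fun m => (μ (S m)).toReal) atTop (𝓝 0) := by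
    have h1 : Tendsto (fun m => μ (S m)) atTop (𝓝 (μ (⋂ m, S m))) :=
      tendsto_measure_iInter_atTop (fun m => (hSmeas m).nullMeasurableSet) hSanti
        ⟨0, measure_ne_top μ _⟩
    rw [hInter] at h1
    have h2 := (ENNReal.tendsto_toReal (a := 0) (by simp)).comp h1
    exact h2
  apply squeeze_zero_norm _ hμS
  intro m
  have hptwise : ∀ x,
      ‖(↑(∑ i, max 0 (1 - ((m : ℝ) + 1) * |Real.sqrt ((hB x).eigenvalues i)|)) : ℂ) / (p : ℂ)‖ ≤
        (S m).indicator (fun _ => (1 : ℝ)) x := by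
    intro x
    by_cases hx : x ∈ S m
    · rw [Set.indicator_of_mem hx, norm_div]
      have hnum : ‖(↑(∑ i, max 0 (1 - ((m : ℝ) + 1) * |Real.sqrt ((hB x).eigenvalues i)|)) : ℂ)‖
          ≤ (p : ℝ) := by
        rw [Complex.norm_real, Real.norm_eq_abs,
          abs_of_nonneg (Finset.sum_nonneg fun i _ => le_max_left _ _)]
        calc (∑ i, max 0 (1 - ((m : ℝ) + 1) * |Real.sqrt ((hB x).eigenvalues i)|))
            ≤ ∑ _i : Fin p, (1 : ℝ) := by
              apply Finset.sum_le_sum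
              intro i _
              apply max_le zero_le_one
              have h4 : 0 ≤ ((m : ℝ) + 1) * |Real.sqrt ((hB x).eigenvalues i)| := by positivity
              linarith
          _ = (p : ℝ) := by simp
      have hden : ‖((p : ℕ) : ℂ)‖ = (p : ℝ) := by simp
      rw [hden, div_le_one (by exact_mod_cast hp)]
      exact hnum
    · rw [Set.indicator_of_notMem hx]
      have hφx : (((m : ℝ) + 1)⁻¹) ^ 2 ≤ φ x := not_lt.mp hx
      have hzero : ∀ i : Fin p, max 0 (1 - ((m : ℝ) + 1) * |Real.sqrt ((hB x).eigenvalues i)|)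
          = 0 := by
        intro i
        have h1 : (((m : ℝ) + 1)⁻¹) ^ 2 ≤ Λ x i := le_trans hφx (hle x i)
        have h2 : ((m : ℝ) + 1)⁻¹ ≤ Real.sqrt (Λ x i) := by
          rw [show ((m : ℝ) + 1)⁻¹ = Real.sqrt ((((m : ℝ) + 1)⁻¹) ^ 2) from
            (Real.sqrt_sq (by positivity)).symm]
          exact Real.sqrt_le_sqrt h1
        have hm1 : (0 : ℝ) < (m : ℝ) + 1 := by positivity
        have h3 : (1 : ℝ) ≤ ((m : ℝ) + 1) * |Real.sqrt (Λ x i)| := by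
          rw [abs_of_nonneg (Real.sqrt_nonneg _)]
          calc (1 : ℝ) = ((m : ℝ) + 1) * ((m : ℝ) + 1)⁻¹ := (mul_inv_cancel₀ hm1.ne').symm
            _ ≤ ((m : ℝ) + 1) * Real.sqrt (Λ x i) := by
                exact mul_le_mul_of_nonneg_left h2 hm1.le
        exact max_eq_left (by linarith)
      rw [Finset.sum_eq_zero (fun i _ => hzero i)]
      simp
  calc ‖∫ x,
      ((↑(∑ i, max 0 (1 - ((m : ℝ) + 1) * |Real.sqrt ((hB x).eigenvalues i)|)) : ℂ) / (p : ℂ)) ∂μ‖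
      ≤ ∫ x, (S m).indicator (fun _ => (1 : ℝ)) x ∂μ :=
        norm_integral_le_of_norm_le ((integrable_const (1 : ℝ)).indicator (hSmeas m))
          (Filter.Eventually.of_forall hptwise)
    _ = (μ (S m)).toReal := by
        rw [integral_indicator_const _ (hSmeas m)]; simp; rfl

/-- If `{A_n}_n ∼_σ f` and `f` has full rank a.e. on `D`, then the proportion of zero
singular values of `A_n` vanishes as `n → ∞`. -/
theorem prop_zero_sv_tendsto_zero (k r s : ℕ) (d e : ℕ → ℕ)
    (hd : Tendsto d atTop atTop) (he : Tendsto e atTop atTop)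
    (A : ∀ n, Matrix (Fin (d n)) (Fin (e n)) ℂ)
    (D : Set (Fin k → ℝ)) (hD0 : 0 < volume D) (hD1 : volume D < ⊤)
    (f : (Fin k → ℝ) → Matrix (Fin r) (Fin s) ℂ)
    (hmeas : ∀ i j, Measurable fun x => f x i j)
    (hdist : HasSVDist k r s d e A D f)
    (hfullrank : ∀ᵐ x ∂(volume.restrict D), (f x).rank = min r s) :
    Tendsto (fun n => (countZeros (svMultiset (A n)) : ℝ) / ((min (d n) (e n) : ℕ) : ℝ))
      atTop (𝓝 0) := by
  classical
  have hfin : IsFiniteMeasure (volume.restrict D) :=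
    ⟨by rw [Measure.restrict_apply_univ]; exact hD1⟩
  set G : ℕ → ℝ → ℝ := fun m t => max 0 (1 - ((m : ℝ) + 1) * |t|) with hGdef
  set F : ℕ → ℝ → ℂ := fun m t => ((G m t : ℝ) : ℂ) with hFdef
  have hGcont : ∀ m, Continuous (G m) := by
    intro m
    apply continuous_const.max
    exact continuous_const.sub (continuous_const.mul continuous_abs)
  have hFcont : ∀ m, Continuous (F m) := fun m => Complex.continuous_ofReal.comp (hGcont m)
  have hGnonneg : ∀ m t, 0 ≤ G m t := fun m t => le_max_left _ _
  have hG0 : ∀ m, G m 0 = 1 := by intro m; simp [hGdef]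
  have hFsupp : ∀ m, HasCompactSupport (F m) := by
    intro m
    apply HasCompactSupport.intro (isCompact_Icc (a := (-1 : ℝ)) (b := 1))
    intro t ht
    have h1 : 1 < |t| := by
      rcases lt_or_ge 1 |t| with h | h
      · exact h
      · exact absurd (abs_le.mp h) (by simpa [Set.mem_Icc] using ht)
    have hm0 : (0 : ℝ) ≤ (m : ℝ) := Nat.cast_nonneg m
    have h2 : (1 : ℝ) ≤ ((m : ℝ) + 1) * |t| := by nlinarith
    show ((G m t : ℝ) : ℂ) = 0
    rw [show G m t = 0 from max_eq_left (by simpa [hGdef] using by linarith)]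
    simp
  have hdistm : ∀ m, Tendsto
      (fun n => ((svMultiset (A n)).map (F m)).sum / ((min (d n) (e n) : ℕ) : ℂ)) atTop
      (𝓝 (((volume D).toReal : ℂ)⁻¹ *
        ∫ x in D, ((svMultiset (f x)).map (F m)).sum / ((min r s : ℕ) : ℂ))) :=
    fun m => hdist (F m) (hFcont m) (hFsupp m)
  set I : ℕ → ℂ := fun m => ∫ x in D, ((svMultiset (f x)).map (F m)).sum / ((min r s : ℕ) : ℂ)
    with hIdef
  set L : ℕ → ℂ := fun m => (((volume D).toReal : ℂ))⁻¹ * I m with hLdef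
  -- key pointwise bound
  have hkey : ∀ m n,
      (countZeros (svMultiset (A n)) : ℝ) / ((min (d n) (e n) : ℕ) : ℝ) ≤
        ‖((svMultiset (A n)).map (F m)).sum / ((min (d n) (e n) : ℕ) : ℂ)‖ := by
    intro m n
    set s0 := svMultiset (A n) with hs0
    have hsum : (s0.map (F m)).sum = (((s0.map (G m)).sum : ℝ) : ℂ) := by
      have hcast : ∀ (t : Multiset ℝ), ((t.sum : ℝ) : ℂ) = (t.map (fun x : ℝ => (x : ℂ))).sum := by
        intro t
        induction t using Multiset.induction_on with
        | empty => simp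
        | cons a t ih => simp [ih]
      rw [show s0.map (F m) = (s0.map (G m)).map (fun t : ℝ => (t : ℂ)) by
        rw [Multiset.map_map]; rfl]
      exact (hcast _).symm
    have hg0 : 0 ≤ (s0.map (G m)).sum := by
      apply Multiset.sum_nonneg
      intro y hy
      obtain ⟨x, _, rfl⟩ := Multiset.mem_map.mp hy
      exact hGnonneg m x
    rw [hsum, show ((min (d n) (e n) : ℕ) : ℂ) = (((min (d n) (e n) : ℕ) : ℝ) : ℂ) from
      (Complex.ofReal_natCast _).symm, ← Complex.ofReal_div, Complex.norm_real, Real.norm_eq_abs,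
      abs_of_nonneg (div_nonneg hg0 (Nat.cast_nonneg _))]
    have hcz := countZeros_le_sum_map s0 (G m) (hGnonneg m) (hG0 m)
    rcases Nat.eq_zero_or_pos (min (d n) (e n)) with h0 | h0
    · simp [h0]
    · have hcpos : (0 : ℝ) < ((min (d n) (e n) : ℕ) : ℝ) := by exact_mod_cast h0
      exact (div_le_div_iff_of_pos_right hcpos).mpr hcz
  -- the limits tend to zero
  have hI0 : Tendsto I atTop (𝓝 0) := by
    rcases Nat.eq_zero_or_pos (min r s) with hmin | hmin
    · have hIeq : I = fun _ => 0 := by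
        funext m
        rw [hIdef]
        simp [hmin]
      rw [hIeq]
      exact tendsto_const_nhds
    · by_cases hrs : r ≤ s
      · -- p = r
        have hminr : min r s = r := min_eq_left hrs
        have hpr : 0 < r := by omega
        set B : (Fin k → ℝ) → Matrix (Fin r) (Fin r) ℂ := fun x => f x * (f x)ᴴ with hBdef
        have hB : ∀ x, (B x).IsHermitian := fun x => isHermitian_mul_conjTranspose_self (f x)
        have hmeasB : ∀ i j, Measurable fun x => B x i j := by
          intro i j
          have : (fun x => B x i j) = fun x => ∑ l, f x i l * (starRingEnd ℂ) (f x j l) := by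
            funext x
            simp [hBdef, Matrix.mul_apply, Matrix.conjTranspose_apply, mul_comm]
          rw [this]
          exact Finset.measurable_sum _ fun l _ =>
            (hmeas i l).mul ((Complex.continuous_conj.measurable).comp (hmeas j l))
        have hpsd : ∀ x i, 0 ≤ (hB x).eigenvalues i := fun x i =>
          Matrix.eigenvalues_self_mul_conjTranspose_nonneg (f x) i
        have hrank' : ∀ᵐ x ∂(volume.restrict D), ∀ i, (hB x).eigenvalues i ≠ 0 := by
          refine hfullrank.mono fun x hx i h0 => ?_
          have h1 : (B x).rank = r := by
            rw [hBdef]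
            simp only
            rw [Matrix.rank_self_mul_conjTranspose, hx, hminr]
          have h2 := (hB x).rank_eq_card_non_zero_eigs
          have h3 := Fintype.card_subtype_lt (p := fun j => (hB x).eigenvalues j ≠ 0)
            (x := i) (by simpa using h0)
          rw [← h2, h1, Fintype.card_fin] at h3
          exact lt_irrefl _ h3
        have haux := herm_aux_tendsto (volume.restrict D) r hpr B hmeasB hB hpsd hrank'
        have hIeq : I = fun m : ℕ => ∫ x in D,
            ((↑(∑ i, max 0 (1 - ((m : ℝ) + 1) * |Real.sqrt ((hB x).eigenvalues i)|)) : ℂ)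
              / (r : ℂ)) := by
          funext m
          rw [hIdef]
          simp only
          congr 1
          funext x
          have hsv : svMultiset (f x) = Finset.univ.val.map fun i =>
              Real.sqrt ((isHermitian_mul_conjTranspose_self (f x)).eigenvalues i) := by
            rw [svMultiset, if_pos (by simpa using hrs)]
          rw [hsv, Multiset.map_map]
          have : ((Finset.univ.val.map fun i =>
              F m (Real.sqrt ((isHermitian_mul_conjTranspose_self (f x)).eigenvalues i))).sum)
              = ∑ i, F m (Real.sqrt ((hB x).eigenvalues i)) := by
            rw [Finset.sum_eq_multiset_sum]
          rw [show (Finset.univ.val.map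
              ((F m) ∘ fun i =>
                Real.sqrt ((isHermitian_mul_conjTranspose_self (f x)).eigenvalues i))).sum
              = ∑ i, F m (Real.sqrt ((hB x).eigenvalues i)) from this]
          rw [hminr]
          congr 1
          rw [hFdef]
          simp only
          push_cast
          rfl
        rw [hIeq]
        exact haux
      · -- p = s
        have hsr : s < r := lt_of_not_ge hrs
        have hmins : min r s = s := min_eq_right hsr.le
        have hps : 0 < s := by omega
        set B : (Fin k → ℝ) → Matrix (Fin s) (Fin s) ℂ := fun x => (f x)ᴴ * f x with hBdef
        have hB : ∀ x, (B x).IsHermitian := fun x => isHermitian_conjTranspose_mul_self (f x)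
        have hmeasB : ∀ i j, Measurable fun x => B x i j := by
          intro i j
          have : (fun x => B x i j) = fun x => ∑ l, (starRingEnd ℂ) (f x l i) * f x l j := by
            funext x
            simp [hBdef, Matrix.mul_apply, Matrix.conjTranspose_apply]
          rw [this]
          exact Finset.measurable_sum _ fun l _ =>
            ((Complex.continuous_conj.measurable).comp (hmeas l i)).mul (hmeas l j)
        have hpsd : ∀ x i, 0 ≤ (hB x).eigenvalues i := fun x i =>
          Matrix.eigenvalues_conjTranspose_mul_self_nonneg (f x) i
        have hrank' : ∀ᵐ x ∂(volume.restrict D), ∀ i, (hB x).eigenvalues i ≠ 0 := by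
          refine hfullrank.mono fun x hx i h0 => ?_
          have h1 : (B x).rank = s := by
            rw [hBdef]
            simp only
            rw [Matrix.rank_conjTranspose_mul_self, hx, hmins]
          have h2 := (hB x).rank_eq_card_non_zero_eigs
          have h3 := Fintype.card_subtype_lt (p := fun j => (hB x).eigenvalues j ≠ 0)
            (x := i) (by simpa using h0)
          rw [← h2, h1, Fintype.card_fin] at h3
          exact lt_irrefl _ h3
        have haux := herm_aux_tendsto (volume.restrict D) s hps B hmeasB hB hpsd hrank'
        have hIeq : I = fun m : ℕ => ∫ x in D,
            ((↑(∑ i, max 0 (1 - ((m : ℝ) + 1) * |Real.sqrt ((hB x).eigenvalues i)|)) : ℂ)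
              / (s : ℂ)) := by
          funext m
          rw [hIdef]
          simp only
          congr 1
          funext x
          have hsv : svMultiset (f x) = Finset.univ.val.map fun i =>
              Real.sqrt ((isHermitian_conjTranspose_mul_self (f x)).eigenvalues i) := by
            rw [svMultiset, if_neg (by simpa using hrs)]
          rw [hsv, Multiset.map_map]
          have : ((Finset.univ.val.map
              ((F m) ∘ fun i =>
                Real.sqrt ((isHermitian_conjTranspose_mul_self (f x)).eigenvalues i))).sum)
              = ∑ i, F m (Real.sqrt ((hB x).eigenvalues i)) := by
            rw [Finset.sum_eq_multiset_sum]
            rfl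
          rw [this, hmins]
          congr 1
          rw [hFdef]
          simp only
          push_cast
          rfl
        rw [hIeq]
        exact haux
  have hL0 : Tendsto L atTop (𝓝 0) := by
    have := hI0.const_mul ((((volume D).toReal : ℝ) : ℂ))⁻¹
    simpa [hLdef] using this
  -- conclude
  rw [NormedAddCommGroup.tendsto_nhds_zero]
  intro ε hε
  have hnorm : Tendsto (fun m => ‖L m‖) atTop (𝓝 0) := by
    simpa using hL0.norm
  obtain ⟨m, hm⟩ := (hnorm.eventually (gt_mem_nhds hε)).exists
  have hseq : Tendsto (fun n => ‖((svMultiset (A n)).map (F m)).sum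
      / ((min (d n) (e n) : ℕ) : ℂ)‖) atTop (𝓝 ‖L m‖) := (hdistm m).norm
  have hev : ∀ᶠ n in atTop, ‖((svMultiset (A n)).map (F m)).sum
      / ((min (d n) (e n) : ℕ) : ℂ)‖ < ε :=
    hseq.eventually (gt_mem_nhds hm)
  filter_upwards [hev] with n hn
  have h1 := hkey m n
  have h2 : 0 ≤ (countZeros (svMultiset (A n)) : ℝ) / ((min (d n) (e n) : ℕ) : ℝ) :=
    div_nonneg (Nat.cast_nonneg _) (Nat.cast_nonneg _)
  rw [Real.norm_eq_abs, abs_of_nonneg h2]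
  exact lt_of_le_of_lt h1 hn
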